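/- If γ is a C¹ curve in M₂ with γ'(s) future-directed timelike for every s (i.e., the time component of γ'(s) strictly exceeds the absolute value of the space component), then for all t > s the difference γ(t) − γ(s) is future-directed timelike; hence γ is an observer. -/

import Mathlib

/-- v is future-directed timelike: time component exceeds |space component|. -/
def FDT (v : ℝ × ℝ) : Prop := |v.2| < v.1

/-- A C¹ curve whose derivative is everywhere future-directed timelike has all its
chords future-directed timelike; hence it is an observer. -/
theorem timelike_curve_is_observer (γ : ℝ → ℝ × ℝ) (hγ : ContDiff ℝ 1 γ)
    (hder : ∀ s : ℝ, FDT (deriv γ s)) :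
    ∀ s t : ℝ, s < t → FDT (γ t - γ s) := by
  have hdiff : Differentiable ℝ γ := hγ.differentiable one_ne_zero
  have hd : ∀ x, HasDerivAt γ (deriv γ x) x := fun x => (hdiff x).hasDerivAt
  -- f - g strictly mono
  have h1 : StrictMono (fun x => (γ x).1 - (γ x).2) := by
    apply strictMono_of_deriv_pos
    intro x
    have : HasDerivAt (fun x => (γ x).1 - (γ x).2)
        ((deriv γ x).1 - (deriv γ x).2) x := (((ContinuousLinearMap.fst ℝ ℝ ℝ).hasFDerivAt.comp_hasDerivAt x (hd x)).sub ((ContinuousLinearMap.snd ℝ ℝ ℝ).hasFDerivAt.comp_hasDerivAt x (hd x)))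
    rw [this.deriv]
    have := hder x
    rw [FDT, abs_lt] at this
    linarith [this.1, this.2]
  have h2 : StrictMono (fun x => (γ x).1 + (γ x).2) := by
    apply strictMono_of_deriv_pos
    intro x
    have : HasDerivAt (fun x => (γ x).1 + (γ x).2)
        ((deriv γ x).1 + (deriv γ x).2) x := (((ContinuousLinearMap.fst ℝ ℝ ℝ).hasFDerivAt.comp_hasDerivAt x (hd x)).add ((ContinuousLinearMap.snd ℝ ℝ ℝ).hasFDerivAt.comp_hasDerivAt x (hd x)))
    rw [this.deriv]
    have := hder x
    rw [FDT, abs_lt] at this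
    linarith [this.1, this.2]
  intro s t hst
  have a1 := h1 hst
  have a2 := h2 hst
  simp only at a1 a2
  rw [FDT, abs_lt]
  constructor <;> [skip; skip] <;> simp [Prod.sub_def] <;> linarith
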